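/- Let n ≥ 1, let β^(2n) = (β_{ij})_{0≤i+j≤2n} be a real sequence, let Ψ(x,y) = (a+bx+cy, d+ex+fy) with bf − ce ≠ 0, and let β̃^(2n) be the transformed sequence β̃_{ij} := L_β(Ψ₁^i Ψ₂^j). Then the moment matrix M̃(n) of β̃ is positive semidefinite if and only if the moment matrix M(n) of β is positive semidefinite. -/

import Mathlib

/-- Index set for the moment matrix of degree `n`:
pairs `(i,j)` of nonnegative integers with `i + j ≤ n`. -/
abbrev MIdx (n : ℕ) := {ij : Fin (n+1) × Fin (n+1) // (ij.1 : ℕ) + (ij.2 : ℕ) ≤ n}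

/-- The moment matrix `M(n)` of a real sequence `β = (β_{ij})`:
`M(n)[(i,j),(k,l)] = β_{i+k, j+l}`. -/
def momentMatrix (n : ℕ) (β : ℕ → ℕ → ℝ) : Matrix (MIdx n) (MIdx n) ℝ :=
  fun p q => β ((p.val.1 : ℕ) + (q.val.1 : ℕ)) ((p.val.2 : ℕ) + (q.val.2 : ℕ))
open MvPolynomial

/-- The Riesz functional of a sequence `β`: `L_β(Σ p_{ij} x^i y^j) = Σ p_{ij} β_{ij}`. -/
noncomputable def riesz (β : ℕ → ℕ → ℝ) (p : MvPolynomial (Fin 2) ℝ) : ℝ :=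
  ∑ m ∈ p.support, p.coeff m * β (m 0) (m 1)

/-- The sequence transformed by the degree-one map
`Ψ(x,y) = (a + bx + cy, d + ex + fy)`:  `β̃_{ij} := L_β(Ψ₁^i Ψ₂^j)`. -/
noncomputable def transSeq (β : ℕ → ℕ → ℝ) (a b c d e f : ℝ) (i j : ℕ) : ℝ :=
  riesz β ((C a + C b * X 0 + C c * X 1) ^ i * (C d + C e * X 0 + C f * X 1) ^ j)

/- ------------- auxiliary development ------------- -/
open Matrix

noncomputable def emn (i j : ℕ) : Fin 2 →₀ ℕ := Finsupp.single 0 i + Finsupp.single 1 j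

@[simp] lemma em_apply0 (i j : ℕ) : emn i j 0 = i := by simp [emn]
@[simp] lemma em_apply1 (i j : ℕ) : emn i j 1 = j := by simp [emn]

lemma em_add (i j k l : ℕ) : emn i j + emn k l = emn (i+k) (j+l) := by
  ext x; fin_cases x <;> simp [emn]

lemma eq_em (m : Fin 2 →₀ ℕ) : m = emn (m 0) (m 1) := by
  ext x; fin_cases x <;> simp [emn]

lemma m_sum (m : Fin 2 →₀ ℕ) : (m.sum fun _ e => e) = m 0 + m 1 := by
  rw [Finsupp.sum_fintype _ _ (fun _ => rfl)]
  simp [Fin.sum_univ_two]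

lemma riesz_superset (β : ℕ → ℕ → ℝ) {p : MvPolynomial (Fin 2) ℝ} {s : Finset (Fin 2 →₀ ℕ)}
    (hs : p.support ⊆ s) : riesz β p = ∑ m ∈ s, p.coeff m * β (m 0) (m 1) := by
  rw [riesz]
  refine Finset.sum_subset hs fun m _ hm => ?_
  rw [MvPolynomial.notMem_support_iff.mp hm, zero_mul]

@[simp] lemma riesz_zero (β : ℕ → ℕ → ℝ) : riesz β 0 = 0 := by simp [riesz]

lemma riesz_add (β : ℕ → ℕ → ℝ) (p q : MvPolynomial (Fin 2) ℝ) :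
    riesz β (p + q) = riesz β p + riesz β q := by
  classical
  rw [riesz_superset β (MvPolynomial.support_add), riesz_superset β (Finset.subset_union_left (s₂ := q.support)), riesz_superset β (Finset.subset_union_right (s₁ := p.support)), ← Finset.sum_add_distrib]
  refine Finset.sum_congr rfl fun m _ => ?_
  rw [coeff_add]; ring

lemma riesz_sum (β : ℕ → ℕ → ℝ) {ι : Type*} (s : Finset ι) (f : ι → MvPolynomial (Fin 2) ℝ) :
    riesz β (∑ i ∈ s, f i) = ∑ i ∈ s, riesz β (f i) := by
  classical
  induction s using Finset.cons_induction with
  | empty => simp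
  | cons i s hi ih => rw [Finset.sum_cons, Finset.sum_cons, riesz_add, ih]

lemma riesz_monomial (β : ℕ → ℕ → ℝ) (m : Fin 2 →₀ ℕ) (c : ℝ) :
    riesz β (monomial m c) = c * β (m 0) (m 1) := by
  rcases eq_or_ne c 0 with h | h
  · simp [riesz, h]
  · simp [riesz, support_monomial, h, coeff_monomial]

lemma riesz_C_mul (β : ℕ → ℕ → ℝ) (c : ℝ) (p : MvPolynomial (Fin 2) ℝ) :
    riesz β (C c * p) = c * riesz β p := by
  rw [p.as_sum, Finset.mul_sum, riesz_sum, riesz_sum, Finset.mul_sum]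
  refine Finset.sum_congr rfl fun m _ => ?_
  rw [C_mul_monomial, riesz_monomial, riesz_monomial]; ring

noncomputable def polyOf (n : ℕ) (v : MIdx n → ℝ) : MvPolynomial (Fin 2) ℝ :=
  ∑ q : MIdx n, monomial (emn q.1.1 q.1.2) (v q)

lemma quadForm (n : ℕ) (β : ℕ → ℕ → ℝ) (v : MIdx n → ℝ) :
    v ⬝ᵥ (momentMatrix n β).mulVec v = riesz β (polyOf n v * polyOf n v) := by
  rw [polyOf, Finset.sum_mul_sum, riesz_sum]
  simp only [riesz_sum, monomial_mul, riesz_monomial, em_add, em_apply0, em_apply1]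
  simp only [dotProduct, Matrix.mulVec, momentMatrix]
  rw [Finset.sum_comm]
  refine Finset.sum_congr rfl fun p _ => ?_
  rw [Finset.mul_sum]
  exact Finset.sum_congr rfl fun q _ => by ring

lemma rep (n : ℕ) (p : MvPolynomial (Fin 2) ℝ) (hp : p.totalDegree ≤ n) :
    polyOf n (fun q => coeff (emn q.1.1 q.1.2) p) = p := by
  apply MvPolynomial.ext
  intro m
  rw [polyOf, coeff_sum]
  simp only [coeff_monomial]
  by_cases hm : (m 0 : ℕ) + (m 1 : ℕ) ≤ n
  · have h0 : (m 0 : ℕ) < n + 1 := by omega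
    have h1 : (m 1 : ℕ) < n + 1 := by omega
    set q0 : MIdx n := ⟨(⟨m 0, h0⟩, ⟨m 1, h1⟩), hm⟩ with hq0
    rw [Finset.sum_eq_single q0]
    · rw [if_pos]; · rw [← eq_em]
      · rw [← eq_em]
    · intro q _ hq
      rw [if_neg]
      intro h
      apply hq
      have h0' : (q.1.1 : ℕ) = m 0 := by
        have := congrArg (fun f => f 0) h; simpa using this
      have h1' : (q.1.2 : ℕ) = m 1 := by
        have := congrArg (fun f => f 1) h; simpa using this
      apply Subtype.ext; apply Prod.ext <;> apply Fin.ext <;> simp [h0', h1', hq0]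
    · intro h; exact absurd (Finset.mem_univ q0) h
  · have hz : coeff m p = 0 := by
      by_contra h
      have hmem : m ∈ p.support := by simpa [MvPolynomial.mem_support_iff] using h
      have := le_totalDegree hmem
      rw [m_sum] at this
      omega
    rw [hz]
    apply Finset.sum_eq_zero
    intro q _
    rw [if_neg]
    intro h
    apply hm
    have h0' : (q.1.1 : ℕ) = m 0 := by
      have := congrArg (fun f => f 0) h; simpa using this
    have h1' : (q.1.2 : ℕ) = m 1 := by
      have := congrArg (fun f => f 1) h; simpa using this
    rw [← h0', ← h1']; exact q.2

lemma momentMatrix_isSymm (n : ℕ) (β : ℕ → ℕ → ℝ) : (momentMatrix n β).IsHermitian := by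
  ext p q
  simp [momentMatrix, Matrix.conjTranspose_apply, add_comm]

lemma psd_iff (n : ℕ) (β : ℕ → ℕ → ℝ) :
    (momentMatrix n β).PosSemidef ↔
      ∀ v : MIdx n → ℝ, 0 ≤ riesz β (polyOf n v * polyOf n v) := by
  constructor
  · intro h v
    have := h.dotProduct_mulVec_nonneg v
    rwa [star_trivial, quadForm] at this
  · intro h
    refine .of_dotProduct_mulVec_nonneg (momentMatrix_isSymm n β) fun v => ?_
    rw [star_trivial, quadForm]
    exact h v

section trans
variable (β : ℕ → ℕ → ℝ) (a b c d e f : ℝ)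

noncomputable def Psi1 : MvPolynomial (Fin 2) ℝ := C a + C b * X 0 + C c * X 1
noncomputable def Psi2 : MvPolynomial (Fin 2) ℝ := C d + C e * X 0 + C f * X 1

noncomputable def Phi : MvPolynomial (Fin 2) ℝ →ₐ[ℝ] MvPolynomial (Fin 2) ℝ :=
  aeval ![Psi1 a b c, Psi2 d e f]

lemma Phi_monomial (m : Fin 2 →₀ ℕ) (r : ℝ) :
    Phi a b c d e f (monomial m r) = C r * (Psi1 a b c) ^ (m 0) * (Psi2 d e f) ^ (m 1) := by
  rw [Phi, aeval_monomial]
  rw [Finsupp.prod_fintype _ _ (fun _ => pow_zero _)]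
  simp [Fin.prod_univ_two, algebraMap_eq, mul_assoc]

lemma riesz_trans (p : MvPolynomial (Fin 2) ℝ) :
    riesz (transSeq β a b c d e f) p = riesz β (Phi a b c d e f p) := by
  conv_lhs => rw [p.as_sum]
  conv_rhs => rw [p.as_sum, map_sum]
  rw [riesz_sum, riesz_sum]
  refine Finset.sum_congr rfl fun m _ => ?_
  rw [riesz_monomial, Phi_monomial, mul_assoc, riesz_C_mul, transSeq, Psi1, Psi2]

lemma totalDegree_Psi1 : (Psi1 a b c).totalDegree ≤ 1 := by
  apply le_trans (totalDegree_add _ _)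
  apply max_le
  · apply le_trans (totalDegree_add _ _)
    apply max_le
    · simp
    · apply le_trans (totalDegree_mul _ _); simp
  · apply le_trans (totalDegree_mul _ _); simp

lemma totalDegree_Psi2 : (Psi2 d e f).totalDegree ≤ 1 := totalDegree_Psi1 d e f

lemma totalDegree_Phi_polyOf (n : ℕ) (v : MIdx n → ℝ) :
    (Phi a b c d e f (polyOf n v)).totalDegree ≤ n := by
  rw [polyOf, map_sum]
  apply totalDegree_finsetSum_le
  intro q _
  rw [Phi_monomial]
  have hq := q.2
  have b1 : (Psi1 a b c ^ ((emn q.1.1 q.1.2) 0)).totalDegree ≤ (q.1.1 : ℕ) := by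
    refine le_trans (totalDegree_pow _ _) ?_
    simpa using Nat.mul_le_mul_left ((emn q.1.1 q.1.2) 0) (totalDegree_Psi1 a b c)
  have b2 : (Psi2 d e f ^ ((emn q.1.1 q.1.2) 1)).totalDegree ≤ (q.1.2 : ℕ) := by
    refine le_trans (totalDegree_pow _ _) ?_
    simpa using Nat.mul_le_mul_left ((emn q.1.1 q.1.2) 1) (totalDegree_Psi2 d e f)
  have bc : (C (v q) : MvPolynomial (Fin 2) ℝ).totalDegree = 0 := totalDegree_C _
  refine le_trans (totalDegree_mul _ _) (le_trans (add_le_add (totalDegree_mul _ _) b2) ?_)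
  omega

lemma dir (n : ℕ) (h : (momentMatrix n β).PosSemidef) :
    (momentMatrix n (transSeq β a b c d e f)).PosSemidef := by
  rw [psd_iff] at h ⊢
  intro v
  rw [riesz_trans, _root_.map_mul]
  set q := Phi a b c d e f (polyOf n v) with hq
  have hdeg : q.totalDegree ≤ n := totalDegree_Phi_polyOf a b c d e f n v
  have := h (fun p => coeff (emn p.1.1 p.1.2) q)
  rwa [rep n q hdeg] at this


lemma Phi_X0 : Phi a b c d e f (X 0) = Psi1 a b c := by
  simp [Phi]

lemma Phi_X1 : Phi a b c d e f (X 1) = Psi2 d e f := by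
  simp [Phi]

lemma riesz_X_pow (i j : ℕ) : riesz β (X 0 ^ i * X 1 ^ j) = β i j := by
  rw [X_pow_eq_monomial, X_pow_eq_monomial, monomial_mul, one_mul, riesz_monomial]
  have h : Finsupp.single (0 : Fin 2) i + Finsupp.single 1 j = emn i j := rfl
  rw [h]; simp

lemma Phi_lin (p q r : ℝ) :
    Phi a b c d e f (C p + C q * X 0 + C r * X 1)
      = C (p + q*a + r*d) + C (q*b + r*e) * X 0 + C (q*c + r*f) * X 1 := by
  rw [map_add, map_add, _root_.map_mul, _root_.map_mul, Phi_X0, Phi_X1]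
  have hc : ∀ x : ℝ, Phi a b c d e f (C x) = C x := fun x => by
    simp [Phi, algebraMap_eq]
  rw [hc, hc, hc, Psi1, Psi2]
  simp only [map_add, _root_.map_mul]
  ring

lemma inv_trans (hdet : b * f - c * e ≠ 0) :
    transSeq (transSeq β a b c d e f) ((c*d - a*f)/(b*f - c*e)) (f/(b*f - c*e))
      (-c/(b*f - c*e)) ((a*e - b*d)/(b*f - c*e)) (-e/(b*f - c*e)) (b/(b*f - c*e)) = β := by
  funext i j
  rw [transSeq, riesz_trans, _root_.map_mul, map_pow, map_pow, Phi_lin, Phi_lin]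
  have c0 : (c*d - a*f)/(b*f - c*e) + (f/(b*f - c*e))*a + (-c/(b*f - c*e))*d = 0 := by
    field_simp; ring
  have c1 : (f/(b*f - c*e))*b + (-c/(b*f - c*e))*e = 1 := by
    rw [div_mul_eq_mul_div, div_mul_eq_mul_div, ← add_div, div_eq_one_iff_eq hdet]; ring
  have c2 : (f/(b*f - c*e))*c + (-c/(b*f - c*e))*f = 0 := by
    field_simp; ring
  have d0 : (a*e - b*d)/(b*f - c*e) + (-e/(b*f - c*e))*a + (b/(b*f - c*e))*d = 0 := by
    field_simp; ring
  have d1 : (-e/(b*f - c*e))*b + (b/(b*f - c*e))*e = 0 := by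
    field_simp; ring
  have d2 : (-e/(b*f - c*e))*c + (b/(b*f - c*e))*f = 1 := by
    rw [div_mul_eq_mul_div, div_mul_eq_mul_div, ← add_div, div_eq_one_iff_eq hdet]; ring
  rw [c0, c1, c2, d0, d1, d2]
  simp only [map_zero, C_1, zero_add, one_mul, zero_mul, add_zero]
  rw [riesz_X_pow]

end trans


/-- Invariance under degree-one transformations, part (3).
`M̃(n) ≥ 0 ⟺ M(n) ≥ 0`. -/
theorem momentMatrix_transform_posSemidef_iff
    (n : ℕ) (hn : 1 ≤ n) (β : ℕ → ℕ → ℝ) (a b c d e f : ℝ)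
    (hdet : b * f - c * e ≠ 0) :
    (momentMatrix n (transSeq β a b c d e f)).PosSemidef ↔
      (momentMatrix n β).PosSemidef := by
  constructor
  · intro h
    have h2 := dir (transSeq β a b c d e f) ((c*d - a*f)/(b*f - c*e)) (f/(b*f - c*e))
      (-c/(b*f - c*e)) ((a*e - b*d)/(b*f - c*e)) (-e/(b*f - c*e)) (b/(b*f - c*e)) n h
    rwa [inv_trans β a b c d e f hdet] at h2
  · exact dir β a b c d e f n
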